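/- For all r ∈ ℕ, in R = W[[q−1]] one has (p^{r+1})_q ≡ p·(p^r)_q modulo (p^r)_q², and for 0 ≤ i ≤ p^r, (p^{r+1} − ip)_q ≡ −q^{−ip}·(ip)_q modulo (p^r)_q. -/

import Mathlib

/-- The twisted integer (q-analog) `(m)_q = 1 + q + ⋯ + q^{m-1}`. -/
def qInt {R : Type*} [CommRing R] (q : R) (n : ℕ) : R := ∑ i ∈ Finset.range n, q ^ i

lemma qInt_add {R : Type*} [CommRing R] (q : R) (a b : ℕ) :
    qInt q (a + b) = qInt q a + q ^ a * qInt q b := by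
  simp [qInt, Finset.sum_range_add, Finset.mul_sum, pow_add]

lemma qInt_mul {R : Type*} [CommRing R] (q : R) (a b : ℕ) :
    qInt q (a * b) = qInt q a * ∑ j ∈ Finset.range b, (q ^ a) ^ j := by
  induction b with
  | zero => simp [qInt]
  | succ b ih =>
      rw [Nat.mul_succ, qInt_add, ih, Finset.sum_range_succ, mul_add, ← pow_mul,
        mul_comm (qInt q a) ((q ^ (a * b)))]

set_option maxHeartbeats 1000000 in
theorem stmt15 {W : Type*} [CommRing W] (p : ℕ) (hp : p.Prime)
    [IsAdicComplete (Ideal.span {(p : W)}) W] (r : ℕ) :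
    (qInt (PowerSeries.X + 1 : PowerSeries W) (p ^ (r + 1)) -
        (p : PowerSeries W) * qInt (PowerSeries.X + 1 : PowerSeries W) (p ^ r) ∈
      Ideal.span {(qInt (PowerSeries.X + 1 : PowerSeries W) (p ^ r)) ^ 2}) ∧
    ∀ i : ℕ, i ≤ p ^ r →
      qInt (PowerSeries.X + 1 : PowerSeries W) (p ^ (r + 1) - i * p) +
          (Ring.inverse (PowerSeries.X + 1 : PowerSeries W)) ^ (i * p) *
            qInt (PowerSeries.X + 1 : PowerSeries W) (i * p) ∈
        Ideal.span {qInt (PowerSeries.X + 1 : PowerSeries W) (p ^ r)} := by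
  set q : PowerSeries W := PowerSeries.X + 1 with hqdef
  set P : PowerSeries W := qInt q (p ^ r) with hP
  set S : PowerSeries W := ∑ j ∈ Finset.range p, (q ^ (p ^ r)) ^ j with hS
  have hkey : qInt q (p ^ (r + 1)) = P * S := by
    rw [pow_succ, qInt_mul]
  have hgeom : P * (q - 1) = q ^ (p ^ r) - 1 := by
    simpa [hP, qInt] using geom_sum_mul q (p ^ r)
  -- S - p divisible by P
  have hSd : P ∣ S - (p : PowerSeries W) := by
    have : S - (p : PowerSeries W)
        = ∑ j ∈ Finset.range p, ((q ^ (p ^ r)) ^ j - 1) := by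
      rw [Finset.sum_sub_distrib]
      simp [hS]
    rw [this]
    refine Finset.dvd_sum fun j _ => ?_
    have h1 : (q ^ (p ^ r)) ^ j - 1
        = (∑ i ∈ Finset.range j, (q ^ (p ^ r)) ^ i) * (q ^ (p ^ r) - 1) :=
      (geom_sum_mul _ j).symm
    rw [h1, ← hgeom]
    exact Dvd.dvd.mul_left (Dvd.intro _ rfl) _
  have hNdvd : P ∣ qInt q (p ^ (r + 1)) := ⟨S, hkey⟩
  have hqunit : IsUnit q := by
    rw [PowerSeries.isUnit_iff_constantCoeff]
    simp [hqdef]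
  constructor
  · rw [Ideal.mem_span_singleton, pow_two]
    have : qInt q (p ^ (r + 1)) - (p : PowerSeries W) * P = P * (S - p) := by
      rw [hkey]; ring
    rw [this]
    exact mul_dvd_mul_left P hSd
  · intro i hi
    rw [Ideal.mem_span_singleton]
    have hle : i * p ≤ p ^ (r + 1) := by
      rw [pow_succ]
      exact Nat.mul_le_mul_right p hi
    have hsplit : qInt q (p ^ (r + 1))
        = qInt q (i * p) + q ^ (i * p) * qInt q (p ^ (r + 1) - i * p) := by
      conv_lhs => rw [← Nat.add_sub_cancel' hle, qInt_add]
    have hinv : (Ring.inverse q) * q = 1 := Ring.inverse_mul_cancel q hqunit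
    have hinvpow : (Ring.inverse q) ^ (i * p) * q ^ (i * p) = 1 := by
      rw [← mul_pow, hinv, one_pow]
    have heq : qInt q (p ^ (r + 1) - i * p)
          + (Ring.inverse q) ^ (i * p) * qInt q (i * p)
        = (Ring.inverse q) ^ (i * p) * qInt q (p ^ (r + 1)) := by
      rw [hsplit, mul_add, ← mul_assoc, hinvpow]
      ring
    rw [heq]
    exact Dvd.dvd.mul_left hNdvd _
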